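/- Let N ≥ 2 be an integer, y : ℤ/Nℤ → ℂ a function with y(−a) = y(a) for all a, and let 0 ≤ m,k ≤ N⁺ be row and column indices; put d = gcd(k,N) (so d = N when k = 0) and N_d = N/d. If d does not divide m, then the (m,k)-entry of the matrix C_N·Y_N is 0. If m = du and k = dv (so that gcd(v, N_d) = 1), then the (m,k)-entry of C_N·Y_N equals d·ŷ_d(t), where t ∈ ℤ/N_dℤ is the unique residue with v·t ≡ u (mod N_d). -/

import Mathlib

open Finset

section Helpers

lemma cos_congr (M : ℕ) (hM : M ≠ 0) {a b : ℕ} (h : a ≡ b [MOD M]) :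
    Real.cos (2 * Real.pi * a / M) = Real.cos (2 * Real.pi * b / M) := by
  obtain ⟨c, hc⟩ := h.dvd
  have hM' : (M : ℝ) ≠ 0 := Nat.cast_ne_zero.mpr hM
  have ha : (a : ℝ) = b - c * M := by
    have h2 : ((b : ℝ)) - a = M * c := by exact_mod_cast congrArg (Int.cast : ℤ → ℝ) hc
    linarith
  have harg : (2 * Real.pi * a / M : ℝ) = 2 * Real.pi * b / M + ((-c : ℤ) : ℝ) * (2 * Real.pi) := by
    rw [ha]
    push_cast
    field_simp
    ring
  rw [harg]
  exact Real.cos_add_int_mul_two_pi _ _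

lemma cos_sum_shift (d : ℕ) (hd : d ≠ 0) (m : ℕ) (θ : ℝ) :
    ∑ j ∈ Finset.range d, Real.cos (θ + 2 * Real.pi * m * j / d) =
      if d ∣ m then d * Real.cos θ else 0 := by
  have hdc : (d : ℂ) ≠ 0 := Nat.cast_ne_zero.mpr hd
  set ζ : ℂ := Complex.exp (2 * Real.pi * m / d * Complex.I) with hζ
  have key : ∑ j ∈ Finset.range d, Complex.exp ((θ + 2 * Real.pi * m * j / d : ℝ) * Complex.I) =
      if d ∣ m then (d : ℂ) * Complex.exp (θ * Complex.I) else 0 := by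
    have hterm : ∀ j ∈ Finset.range d,
        Complex.exp ((θ + 2 * Real.pi * m * j / d : ℝ) * Complex.I)
          = Complex.exp (θ * Complex.I) * ζ ^ j := by
      intro j _
      rw [hζ, ← Complex.exp_nat_mul, ← Complex.exp_add]
      congr 1
      push_cast
      field_simp
    rw [Finset.sum_congr rfl hterm, ← Finset.mul_sum]
    have hζd : ζ ^ d = 1 := by
      rw [hζ, ← Complex.exp_nat_mul]
      have h2 : (d : ℂ) * (2 * Real.pi * m / d * Complex.I) = (m : ℤ) * (2 * Real.pi * Complex.I) := by
        push_cast; field_simp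
      rw [h2, Complex.exp_int_mul_two_pi_mul_I]
    by_cases hdvd : d ∣ m
    · obtain ⟨c, hc⟩ := id hdvd
      have hz1 : ζ = 1 := by
        rw [hζ]
        have h2 : 2 * (Real.pi : ℂ) * (m : ℂ) / (d : ℂ) * Complex.I
            = ((c : ℤ) : ℂ) * (2 * (Real.pi : ℂ) * Complex.I) := by
          push_cast [hc]; field_simp
        rw [h2, Complex.exp_int_mul_two_pi_mul_I]
      rw [hz1, if_pos hdvd]
      simp [mul_comm]
    · have hζ1 : ζ ≠ 1 := by
        intro h1
        rw [hζ, Complex.exp_eq_one_iff] at h1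
        obtain ⟨n, hn⟩ := h1
        apply hdvd
        have him := congrArg Complex.im hn
        simp [Complex.mul_im, Complex.ofReal_im, Complex.ofReal_re] at him
        have hd' : (d : ℝ) ≠ 0 := Nat.cast_ne_zero.mpr hd
        have hm : (m : ℝ) = n * d := by
          field_simp at him
          have h2π : (2 * Real.pi : ℝ) ≠ 0 := by positivity
          exact mul_left_cancel₀ h2π (by linear_combination (2 * Real.pi) * him)
        have hmz : (m : ℤ) = n * d := by exact_mod_cast hm
        exact Int.natCast_dvd_natCast.mp ⟨n, by linarith⟩
      rw [geom_sum_eq hζ1, hζd]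
      simp [hdvd]
  have hre : ∀ j ∈ Finset.range d, Real.cos (θ + 2 * Real.pi * m * j / d)
      = (Complex.exp ((θ + 2 * Real.pi * m * j / d : ℝ) * Complex.I)).re := by
    intro j _
    rw [Complex.exp_ofReal_mul_I_re]
  rw [Finset.sum_congr rfl hre, ← Complex.re_sum, key]
  split_ifs
  · simp [Complex.mul_re, Complex.exp_ofReal_mul_I_re]
  · simp

lemma half_sum (N : ℕ) (hN : 2 ≤ N) (f : ℕ → ℂ)
    (hsym : ∀ n ≤ N, f (N - n) = f n) :
    2 * ∑ n ∈ Finset.range (N / 2 + 1),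
        (if n = 0 ∨ (N % 2 = 0 ∧ n = N / 2) then (1 / 2 : ℂ) else 1) * f n
      = ∑ n ∈ Finset.range N, f n := by
  set h := N / 2 with hh
  have hh1 : 1 ≤ h := by omega
  have hsplit : ∑ n ∈ Finset.range (N + 1), f n
      = ∑ n ∈ Finset.range (h + 1), f n + ∑ n ∈ Finset.Ico (h + 1) (N + 1), f n := by
    rw [Finset.range_eq_Ico, Finset.range_eq_Ico]
    exact (Finset.sum_Ico_consecutive f (by omega : 0 ≤ h + 1) (by omega : h + 1 ≤ N + 1)).symm
  have hrefl : ∑ n ∈ Finset.Ico (h + 1) (N + 1), f n = ∑ j ∈ Finset.range (N - h), f j := by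
    rw [Finset.range_eq_Ico]
    refine Finset.sum_nbij' (i := fun n => N - n) (j := fun j => N - j)
      ?_ ?_ ?_ ?_ ?_
    · intro a ha; simp only [Finset.mem_Ico] at ha ⊢; omega
    · intro a ha; simp only [Finset.mem_Ico] at ha ⊢; omega
    · intro a ha; simp only [Finset.mem_Ico] at ha; show N - (N - a) = a; omega
    · intro a ha; simp only [Finset.mem_Ico] at ha; show N - (N - a) = a; omega
    · intro a ha
      simp only [Finset.mem_Ico] at ha
      exact ((hsym (N - a) (by omega)).symm.trans (by rw [Nat.sub_sub_self (by omega)])).symm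
  have hN1 : ∑ n ∈ Finset.range (N + 1), f n = ∑ n ∈ Finset.range N, f n + f N :=
    Finset.sum_range_succ f N
  have hfN : f N = f 0 := by simpa using hsym 0 (by omega)
  have e0 : (if (0:ℕ) = 0 ∨ (N % 2 = 0 ∧ (0:ℕ) = h) then (1/2:ℂ) else 1) = 1/2 := by norm_num
  have hr1 : ∑ n ∈ Finset.range (h + 1), f n = f 0 + ∑ n ∈ Finset.Ico 1 (h + 1), f n := by
    rw [Finset.range_eq_Ico, Finset.sum_eq_sum_Ico_succ_bot (by omega : 0 < h + 1)]
  rcases Nat.even_or_odd N with hev | hodd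
  · have hmod : N % 2 = 0 := Nat.even_iff.mp hev
    have hNh : N - h = h := by omega
    rw [hNh] at hrefl
    have hr2 : ∑ n ∈ Finset.range h, f n = f 0 + ∑ n ∈ Finset.Ico 1 h, f n := by
      rw [Finset.range_eq_Ico, Finset.sum_eq_sum_Ico_succ_bot (by omega : 0 < h)]
    have hr3 : ∑ n ∈ Finset.Ico 1 (h + 1), f n = ∑ n ∈ Finset.Ico 1 h, f n + f h :=
      Finset.sum_Ico_succ_top (by omega) f
    have hA : ∑ n ∈ Finset.range N, f n
        = f 0 + 2 * ∑ n ∈ Finset.Ico 1 h, f n + f h := by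
      linear_combination -hN1 + hsplit + hrefl + hr1 + hr3 + hr2 - hfN
    have hwE : ∑ n ∈ Finset.range (h + 1),
        (if n = 0 ∨ (N % 2 = 0 ∧ n = h) then (1 / 2 : ℂ) else 1) * f n
        = (1/2 : ℂ) * f 0 + ∑ n ∈ Finset.Ico 1 h, f n + (1/2 : ℂ) * f h := by
      rw [Finset.range_eq_Ico, Finset.sum_eq_sum_Ico_succ_bot (by omega : 0 < h + 1),
        Finset.sum_Ico_succ_top (by omega : 1 ≤ h), e0]
      have eh : (if h = 0 ∨ (N % 2 = 0 ∧ h = h) then (1/2:ℂ) else 1) = 1/2 :=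
        if_pos (Or.inr ⟨hmod, rfl⟩)
      rw [eh]
      have hc : ∀ n ∈ Finset.Ico 1 h,
          (if n = 0 ∨ (N % 2 = 0 ∧ n = h) then (1 / 2 : ℂ) else 1) * f n = f n := by
        intro n hn
        simp only [Finset.mem_Ico] at hn
        rw [if_neg (by omega), one_mul]
      rw [Finset.sum_congr rfl hc]
      ring
    linear_combination 2 * hwE - hA
  · have hmod : N % 2 = 1 := Nat.odd_iff.mp hodd
    have hNh : N - h = h + 1 := by omega
    rw [hNh] at hrefl
    have hrefl' : ∑ n ∈ Finset.Ico (h + 1) (N + 1), f n = ∑ n ∈ Finset.range (h+1), f n := hrefl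
    have hA : ∑ n ∈ Finset.range N, f n
        = f 0 + 2 * ∑ n ∈ Finset.Ico 1 (h + 1), f n := by
      linear_combination -hN1 + hsplit + hrefl' + 2 * hr1 - hfN
    have hwO : ∑ n ∈ Finset.range (h + 1),
        (if n = 0 ∨ (N % 2 = 0 ∧ n = h) then (1 / 2 : ℂ) else 1) * f n
        = (1/2 : ℂ) * f 0 + ∑ n ∈ Finset.Ico 1 (h + 1), f n := by
      rw [Finset.range_eq_Ico, Finset.sum_eq_sum_Ico_succ_bot (by omega : 0 < h + 1), e0]
      have hc : ∀ n ∈ Finset.Ico 1 (h + 1),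
          (if n = 0 ∨ (N % 2 = 0 ∧ n = h) then (1 / 2 : ℂ) else 1) * f n = f n := by
        intro n hn
        simp only [Finset.mem_Ico] at hn
        rw [if_neg (by omega), one_mul]
      rw [Finset.sum_congr rfl hc]
    linear_combination 2 * hwO - hA

lemma sum_range_mul_split (M d : ℕ) (f : ℕ → ℂ) :
    ∑ n ∈ Finset.range (M * d), f n
      = ∑ j ∈ Finset.range d, ∑ a ∈ Finset.range M, f (a + j * M) := by
  rcases Nat.eq_zero_or_pos M with hM | hM
  · simp [hM]
  rw [← Finset.sum_product']
  refine Finset.sum_nbij' (i := fun n => ((n / M, n % M) : ℕ × ℕ))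
    (j := fun p => p.2 + p.1 * M) ?_ ?_ ?_ ?_ ?_
  · intro n hn
    simp only [Finset.mem_range, Finset.mem_product] at hn ⊢
    constructor
    · exact Nat.div_lt_of_lt_mul (by omega)
    · exact Nat.mod_lt _ hM
  · intro p hp
    simp only [Finset.mem_range, Finset.mem_product] at hp ⊢
    calc p.2 + p.1 * M < M + p.1 * M := by omega
    _ = (p.1 + 1) * M := by ring
    _ ≤ d * M := Nat.mul_le_mul_right M (by omega)
    _ = M * d := Nat.mul_comm d M
  · intro n hn
    show n % M + (n / M) * M = n
    rw [Nat.mul_comm]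
    exact Nat.mod_add_div n M
  · intro p hp
    simp only [Finset.mem_range, Finset.mem_product] at hp
    show ((p.2 + p.1 * M) / M, (p.2 + p.1 * M) % M) = p
    rw [Nat.add_mul_div_right _ _ hM, Nat.div_eq_of_lt hp.2, Nat.add_mul_mod_self_right,
      Nat.mod_eq_of_lt hp.2]
    simp
  · intro n hn
    show f n = f (n % M + (n / M) * M)
    rw [Nat.mul_comm, Nat.mod_add_div n M]

lemma sum_range_zmod (M : ℕ) [NeZero M] (g : ZMod M → ℂ) :
    ∑ n ∈ Finset.range M, g ((n : ℕ) : ZMod M) = ∑ x : ZMod M, g x := by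
  refine Finset.sum_nbij' (i := fun n => ((n : ℕ) : ZMod M)) (j := fun x => x.val)
    ?_ ?_ ?_ ?_ ?_
  · intro a _; exact Finset.mem_univ _
  · intro x _
    simp only [Finset.mem_range]
    exact ZMod.val_lt x
  · intro a ha
    simp only [Finset.mem_range] at ha
    exact ZMod.val_cast_of_lt ha
  · intro x _
    exact ZMod.natCast_rightInverse x
  · intro a _; rfl

lemma sum_Icc_one_eq_sum_range (M : ℕ) (hM : 1 ≤ M) (f : ℕ → ℂ) (hf : f M = f 0) :
    ∑ r ∈ Finset.Icc 1 M, f r = ∑ r ∈ Finset.range M, f r := by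
  rw [← Finset.Ico_add_one_right_eq_Icc, Finset.sum_Ico_succ_top (by omega : 1 ≤ M), hf,
    Finset.range_eq_Ico, Finset.sum_eq_sum_Ico_succ_bot (by omega : 0 < M)]
  ring

end Helpers

/-- The discrete cosine matrix `C_N`, of size `(N⁺+1) × (N⁺+1)` with `N⁺ = ⌊N/2⌋`. -/
noncomputable def cosMatrix (N : ℕ) : Matrix (Fin (N / 2 + 1)) (Fin (N / 2 + 1)) ℝ :=
  Matrix.of fun m n =>
    (if (n : ℕ) = 0 ∨ (N % 2 = 0 ∧ (n : ℕ) = N / 2) then (1 / 2 : ℝ) else 1) *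
      Real.cos (2 * Real.pi * (m : ℕ) * (n : ℕ) / N)

/-- The matrix `Y_N` attached to an even function `y : ℤ/Nℤ → ℂ`:
its `(i,j)` entry is `y(ij mod N)`, `0 ≤ i,j ≤ N⁺`. -/
def YMat (N : ℕ) (y : ZMod N → ℂ) : Matrix (Fin (N / 2 + 1)) (Fin (N / 2 + 1)) ℂ :=
  Matrix.of fun i j => y (((i : ℕ) : ZMod N) * ((j : ℕ) : ZMod N))

/-- For a divisor `d` of `N` and `t ∈ ℤ/N_dℤ` (`N_d = N/d`),
`ŷ_d(t) = (1/2)·Σ_{r=1}^{N_d} y(dr mod N)·cos(2πtr/N_d)`. -/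
noncomputable def yhat (N d : ℕ) (y : ZMod N → ℂ) (t : ZMod (N / d)) : ℂ :=
  (1 / 2 : ℂ) * ∑ r ∈ Finset.Icc 1 (N / d),
    y (((d * r : ℕ) : ZMod N)) *
      (Real.cos (2 * Real.pi * (ZMod.val t) * r / ((N / d : ℕ) : ℝ)) : ℝ)

/-- Entry structure of `C_N·Y_N` for even `y`: with `d = gcd(k,N)`, the `(m,k)` entry
vanishes unless `d ∣ m`, and if `m = du`, `k = dv` then it equals `d·ŷ_d(t)` where `t`
is the unique residue mod `N_d = N/d` with `v·t ≡ u (mod N_d)`. -/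
theorem cosMatrix_mul_YMat_apply (N : ℕ) (hN : 2 ≤ N) (y : ZMod N → ℂ)
    (hy : ∀ a : ZMod N, y (-a) = y a) (m k : Fin (N / 2 + 1)) :
    (¬ (Nat.gcd (k : ℕ) N ∣ (m : ℕ)) →
      ((cosMatrix N).map (fun r => (r : ℂ)) * YMat N y) m k = 0) ∧
    (∀ u v : ℕ, (m : ℕ) = Nat.gcd (k : ℕ) N * u → (k : ℕ) = Nat.gcd (k : ℕ) N * v →
      ∀ t : ZMod (N / Nat.gcd (k : ℕ) N),
        (v : ZMod (N / Nat.gcd (k : ℕ) N)) * t = (u : ZMod (N / Nat.gcd (k : ℕ) N)) →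
        ((cosMatrix N).map (fun r => (r : ℂ)) * YMat N y) m k =
          (Nat.gcd (k : ℕ) N : ℂ) * yhat N (Nat.gcd (k : ℕ) N) y t) := by
  classical
  have hN0 : (N : ℝ) ≠ 0 := Nat.cast_ne_zero.mpr (by omega)
  set f : ℕ → ℂ := fun n =>
    ((Real.cos (2 * Real.pi * (m : ℕ) * n / N) : ℝ) : ℂ) * y (((n * (k : ℕ) : ℕ) : ZMod N))
    with hf
  have hentry : ((cosMatrix N).map (fun r => (r : ℂ)) * YMat N y) m k
      = ∑ n ∈ Finset.range (N / 2 + 1),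
          (if n = 0 ∨ (N % 2 = 0 ∧ n = N / 2) then (1 / 2 : ℂ) else 1) * f n := by
    rw [Matrix.mul_apply, ← Fin.sum_univ_eq_sum_range (fun n =>
      (if n = 0 ∨ (N % 2 = 0 ∧ n = N / 2) then (1 / 2 : ℂ) else 1) * f n) (N / 2 + 1)]
    refine Finset.sum_congr rfl fun n _ => ?_
    simp only [Matrix.map_apply, cosMatrix, YMat, Matrix.of_apply, hf]
    rw [Nat.cast_mul]
    push_cast [apply_ite (fun r : ℝ => (r : ℂ))]
    ring
  have hsym : ∀ n ≤ N, f (N - n) = f n := by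
    intro n hn
    simp only [hf]
    have hcos : Real.cos (2 * Real.pi * (m : ℕ) * ((N - n : ℕ) : ℝ) / N)
        = Real.cos (2 * Real.pi * (m : ℕ) * (n : ℝ) / N) := by
      have hsub : ((N - n : ℕ) : ℝ) = (N : ℝ) - n := by
        push_cast [Nat.cast_sub hn]; ring
      rw [hsub]
      have harg : 2 * Real.pi * (m : ℕ) * ((N : ℝ) - n) / N
          = ((m : ℕ) : ℝ) * (2 * Real.pi) - 2 * Real.pi * (m : ℕ) * n / N := by
        field_simp
      rw [harg, Real.cos_nat_mul_two_pi_sub]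
    have hyy : y ((((N - n) * (k : ℕ) : ℕ) : ZMod N)) = y (((n * (k : ℕ) : ℕ) : ZMod N)) := by
      have hcast : (((N - n) * (k : ℕ) : ℕ) : ZMod N) = -((n * (k : ℕ) : ℕ) : ZMod N) := by
        have hmul : (N - n) * (k : ℕ) = N * k - n * k := by
          rw [Nat.sub_mul]
        rw [hmul, Nat.cast_sub (Nat.mul_le_mul_right _ hn)]
        push_cast
        simp
      rw [hcast, hy]
    rw [hcos, hyy]
  have key := half_sum N hN f hsym
  set d := Nat.gcd (k : ℕ) N with hd
  have hdN : d ∣ N := Nat.gcd_dvd_right _ _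
  have hdk : d ∣ (k : ℕ) := Nat.gcd_dvd_left _ _
  have hd0 : d ≠ 0 := by
    intro h0
    have := Nat.eq_zero_of_gcd_eq_zero_right (hd ▸ h0)
    omega
  set M := N / d with hMdef
  have hMd : M * d = N := Nat.div_mul_cancel hdN
  have hM0 : M ≠ 0 := by
    intro h0
    rw [h0, Nat.zero_mul] at hMd
    omega
  haveI : NeZero M := ⟨hM0⟩
  have hd0' : (d : ℝ) ≠ 0 := Nat.cast_ne_zero.mpr hd0
  have hM0' : (M : ℝ) ≠ 0 := Nat.cast_ne_zero.mpr hM0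
  have hNMd : (N : ℝ) = (M : ℝ) * d := by rw [← hMd]; push_cast; ring
  have key2 : ∑ n ∈ Finset.range N, f n
      = ∑ a ∈ Finset.range M,
          ((if d ∣ (m : ℕ) then (d : ℝ) * Real.cos (2 * Real.pi * (m : ℕ) * a / N) else 0 : ℝ) : ℂ)
            * y (((a * (k : ℕ) : ℕ) : ZMod N)) := by
    calc ∑ n ∈ Finset.range N, f n = ∑ n ∈ Finset.range (M * d), f n := by rw [hMd]
    _ = ∑ j ∈ Finset.range d, ∑ a ∈ Finset.range M, f (a + j * M) :=
        sum_range_mul_split M d f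
    _ = ∑ j ∈ Finset.range d, ∑ a ∈ Finset.range M,
          ((Real.cos (2 * Real.pi * (m : ℕ) * a / N + 2 * Real.pi * (m : ℕ) * j / d) : ℝ) : ℂ)
            * y (((a * (k : ℕ) : ℕ) : ZMod N)) := by
        refine Finset.sum_congr rfl fun j _ => Finset.sum_congr rfl fun a _ => ?_
        simp only [hf]
        congr 1
        · norm_cast
          congr 1
          push_cast
          rw [hNMd]
          field_simp
        · congr 1
          have hNat : (a + j * M) * (k : ℕ) = a * (k : ℕ) + j * (M * (k : ℕ)) := by ring
          have hdvd : N ∣ j * (M * (k : ℕ)) := by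
            obtain ⟨w, hw⟩ := hdk
            refine Dvd.dvd.mul_left ⟨w, ?_⟩ j
            rw [hw, ← Nat.mul_assoc, hMd]
          have hzero : ((j * (M * (k : ℕ)) : ℕ) : ZMod N) = 0 :=
            (ZMod.natCast_eq_zero_iff _ _).mpr hdvd
          rw [hNat, Nat.cast_add, hzero, add_zero]
    _ = ∑ a ∈ Finset.range M, ∑ j ∈ Finset.range d,
          ((Real.cos (2 * Real.pi * (m : ℕ) * a / N + 2 * Real.pi * (m : ℕ) * j / d) : ℝ) : ℂ)
            * y (((a * (k : ℕ) : ℕ) : ZMod N)) := Finset.sum_comm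
    _ = ∑ a ∈ Finset.range M,
          ((∑ j ∈ Finset.range d,
            Real.cos (2 * Real.pi * (m : ℕ) * a / N + 2 * Real.pi * (m : ℕ) * j / d) : ℝ) : ℂ)
            * y (((a * (k : ℕ) : ℕ) : ZMod N)) := by
        refine Finset.sum_congr rfl fun a _ => ?_
        rw [← Finset.sum_mul]
        norm_cast
    _ = _ := by
        refine Finset.sum_congr rfl fun a _ => ?_
        rw [cos_sum_shift d hd0 (m : ℕ) (2 * Real.pi * (m : ℕ) * a / N)]
  constructor
  · intro hndvd
    have hS0 : ∑ n ∈ Finset.range N, f n = 0 := by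
      rw [key2]
      refine Finset.sum_eq_zero fun a _ => ?_
      rw [if_neg hndvd]
      simp
    rw [hentry]
    rw [hS0] at key
    linear_combination (1 / 2 : ℂ) * key
  · intro u v hmu hkv t hvt
    have hdm : d ∣ (m : ℕ) := ⟨u, hmu⟩
    have hcop : Nat.Coprime v M := by
      have h2 : Nat.gcd (d * v) (d * M) = d * Nat.gcd v M := Nat.gcd_mul_left d v M
      have hdM : d * M = N := by rw [Nat.mul_comm]; exact hMd
      rw [← hkv, hdM, ← hd] at h2
      have h3 : d * Nat.gcd v M = d * 1 := by rw [Nat.mul_one, ← h2]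
      exact Nat.eq_of_mul_eq_mul_left (Nat.pos_of_ne_zero hd0) h3
    set G : ZMod M → ℂ := fun x =>
      ((Real.cos (2 * Real.pi * ((ZMod.val t * ZMod.val x : ℕ)) / M) : ℝ) : ℂ)
        * y (((d * ZMod.val x : ℕ) : ZMod N)) with hG
    have hterm : ∀ a ∈ Finset.range M,
        ((Real.cos (2 * Real.pi * (m : ℕ) * a / N) : ℝ) : ℂ) * y (((a * (k : ℕ) : ℕ) : ZMod N))
          = G (((a * v : ℕ) : ZMod M)) := by
      intro a _
      simp only [hG]
      have hval : ZMod.val (((a * v : ℕ) : ZMod M)) = (a * v) % M := ZMod.val_natCast _ _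
      have hmodeq : (u * a) ≡ ZMod.val t * ((a * v) % M) [MOD M] := by
        refine (ZMod.natCast_eq_natCast_iff _ _ _).mp ?_
        push_cast
        rw [ZMod.natCast_mod, ZMod.natCast_rightInverse t]
        rw [← hvt]
        push_cast
        ring
      congr 1
      · norm_cast
        have e1 : 2 * Real.pi * (m : ℕ) * a / N = 2 * Real.pi * ((u * a : ℕ) : ℝ) / M := by
          have hm' : ((m : ℕ) : ℝ) = (d : ℝ) * u := by exact_mod_cast congrArg (Nat.cast : ℕ → ℝ) hmu
          push_cast
          rw [hm', hNMd]
          field_simp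
        rw [e1, hval]
        exact_mod_cast cos_congr M hM0 hmodeq
      · rw [hval]
        congr 1
        have h1 : a * (k : ℕ) = d * (a * v) := by rw [hkv]; ring
        rw [h1]
        refine (ZMod.natCast_eq_natCast_iff _ _ _).mpr ?_
        have hmm : a * v ≡ (a * v) % M [MOD M] := (Nat.mod_modEq _ _).symm
        have := Nat.ModEq.mul_left' (c := d) hmm
        rwa [show d * M = N from by rw [Nat.mul_comm]; exact hMd] at this
    have key3 : ∑ n ∈ Finset.range N, f n
        = (d : ℂ) * ∑ a ∈ Finset.range M, G (((a : ℕ) : ZMod M) * ((v : ℕ) : ZMod M)) := by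
      rw [key2, Finset.mul_sum]
      refine Finset.sum_congr rfl fun a ha => ?_
      rw [if_pos hdm]
      have := hterm a ha
      push_cast at this ⊢
      rw [← this]
      ring
    have key5 : ∑ a ∈ Finset.range M, G (((a : ℕ) : ZMod M) * ((v : ℕ) : ZMod M))
        = ∑ x : ZMod M, G x := by
      rw [sum_range_zmod M (fun x => G (x * ((v : ℕ) : ZMod M)))]
      obtain ⟨w, hw⟩ : IsUnit ((v : ℕ) : ZMod M) :=
        ⟨ZMod.unitOfCoprime v hcop, ZMod.coe_unitOfCoprime v hcop⟩
      rw [← hw]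
      exact Fintype.sum_bijective (· * (w : ZMod M)) (Units.mulRight_bijective w) _ _
        (fun x => rfl)
    have key6 : ∑ x : ZMod M, G x
        = ∑ r ∈ Finset.range M,
            ((Real.cos (2 * Real.pi * ((ZMod.val t * r : ℕ)) / M) : ℝ) : ℂ)
              * y (((d * r : ℕ) : ZMod N)) := by
      rw [← sum_range_zmod M G]
      refine Finset.sum_congr rfl fun r hr => ?_
      simp only [hG]
      rw [ZMod.val_natCast, Nat.mod_eq_of_lt (Finset.mem_range.mp hr)]
    have key7 : yhat N d y t
        = (1 / 2 : ℂ) * ∑ r ∈ Finset.range M,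
            y (((d * r : ℕ) : ZMod N))
              * ((Real.cos (2 * Real.pi * ((ZMod.val t * r : ℕ)) / M) : ℝ) : ℂ) := by
      have h0 : yhat N d y t
          = (1 / 2 : ℂ) * ∑ r ∈ Finset.Icc 1 M,
              y (((d * r : ℕ) : ZMod N))
                * ((Real.cos (2 * Real.pi * (ZMod.val t : ℝ) * r / (M : ℝ)) : ℝ) : ℂ) := rfl
      rw [h0]
      have hfM : y (((d * M : ℕ) : ZMod N))
            * ((Real.cos (2 * Real.pi * (ZMod.val t : ℝ) * (M : ℕ) / (M : ℝ)) : ℝ) : ℂ)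
          = y (((d * 0 : ℕ) : ZMod N))
            * ((Real.cos (2 * Real.pi * (ZMod.val t : ℝ) * (0 : ℕ) / (M : ℝ)) : ℝ) : ℂ) := by
        congr 1
        · congr 1
          rw [show d * M = N from by rw [Nat.mul_comm]; exact hMd]
          simp
        · norm_cast
          have h1 : 2 * Real.pi * (ZMod.val t : ℝ) * (M : ℝ) / (M : ℝ)
              = 2 * Real.pi * ((ZMod.val t * M : ℕ) : ℝ) / (M : ℝ) := by push_cast; ring
          have h2 : 2 * Real.pi * (ZMod.val t : ℝ) * (0 : ℝ) / (M : ℝ)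
              = 2 * Real.pi * ((0 : ℕ) : ℝ) / (M : ℝ) := by push_cast; ring
          rw [h1, h2]
          exact cos_congr M hM0 (Nat.modEq_zero_iff_dvd.mpr ⟨ZMod.val t, Nat.mul_comm _ _⟩)
      rw [sum_Icc_one_eq_sum_range M (Nat.one_le_iff_ne_zero.mpr hM0)
        (fun r => y (((d * r : ℕ) : ZMod N))
          * ((Real.cos (2 * Real.pi * (ZMod.val t : ℝ) * r / (M : ℝ)) : ℝ) : ℂ)) hfM]
      congr 1
      refine Finset.sum_congr rfl fun r _ => ?_
      congr 2
      push_cast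
      ring
    have hS : ∑ n ∈ Finset.range N, f n
        = (d : ℂ) * ∑ r ∈ Finset.range M,
            y (((d * r : ℕ) : ZMod N))
              * ((Real.cos (2 * Real.pi * ((ZMod.val t * r : ℕ)) / M) : ℝ) : ℂ) := by
      rw [key3, key5, key6, Finset.mul_sum, Finset.mul_sum]
      exact Finset.sum_congr rfl fun r _ => by ring
    rw [hentry, key7]
    rw [hS] at key
    linear_combination (1 / 2 : ℂ) * key
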